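/- Let X be a geodesic metric space, π a Borel probability measure on X × X whose support is c-cyclically monotone for c = d², and suppose (x₁, γ¹(1)), (x₂, γ²(1)) ∈ spt(π) where γ¹, γ² are constant-speed geodesics with γ¹(0) = x₁, γ²(0) = x₂. Then for every t ∈ [0,1], d²(x₁, γ¹(t)) + d²(x₂, γ²(t)) ≤ d²(x₁, γ²(t)) + d²(x₂, γ¹(t)). -/
import Mathlib


open Set

def IsGeodesic {X : Type*} [MetricSpace X] (γ : ℝ → X) : Prop :=
  ∀ s ∈ Icc (0 : ℝ) 1, ∀ t ∈ Icc (0 : ℝ) 1,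
    dist (γ s) (γ t) = |s - t| * dist (γ 0) (γ 1)

def CyclicallyMonotone {X : Type*} [MetricSpace X] (Γ : Set (X × X)) : Prop :=
  ∀ (N : ℕ) (x y : Fin N → X), (∀ i, (x i, y i) ∈ Γ) → ∀ σ : Equiv.Perm (Fin N),
    ∑ i, dist (x i) (y i) ^ 2 ≤ ∑ i, dist (x (σ i)) (y i) ^ 2

/-- The support of a measure on a metric space. -/
def measureSupport {Y : Type*} [MetricSpace Y] [MeasurableSpace Y]
    (π : MeasureTheory.Measure Y) : Set Y :=
  {p | ∀ ε > (0 : ℝ), 0 < π (Metric.ball p ε)}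

/-- Quadratic helper: if `a ≥ A - (1-t)d` with everything nonnegative and `t ∈ [0,1]`,
then `a² ≥ tA² - t(1-t)d²`. -/
lemma quad_helper {a A d t : ℝ} (ha : 0 ≤ a) (hA : 0 ≤ A) (hd : 0 ≤ d)
    (ht0 : 0 ≤ t) (ht1 : t ≤ 1) (h : A - (1 - t) * d ≤ a) :
    t * A ^ 2 - t * (1 - t) * d ^ 2 ≤ a ^ 2 := by
  rcases le_or_gt A ((1 - t) * d) with hc | hc
  · nlinarith [sq_nonneg a,
      mul_le_mul_of_nonneg_left (mul_le_mul hc hc hA (mul_nonneg (sub_nonneg.2 ht1) hd)) ht0,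
      mul_nonneg (mul_nonneg (mul_nonneg ht0 ht0) (sub_nonneg.2 ht1)) (sq_nonneg d)]
  · nlinarith [sq_nonneg (A - d), sq_nonneg (a - (A - (1 - t) * d)),
      mul_nonneg (sub_nonneg.2 ht1) (sq_nonneg (A - d))]

theorem two_point_interpolated_monotonicity {X : Type*} [MetricSpace X]
    [MeasurableSpace X] [BorelSpace X]
    (hgeo : ∀ x y : X, ∃ γ : ℝ → X, IsGeodesic γ ∧ γ 0 = x ∧ γ 1 = y)
    (π : MeasureTheory.Measure (X × X)) [MeasureTheory.IsProbabilityMeasure π]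
    (hmono : CyclicallyMonotone (measureSupport π))
    (x₁ x₂ : X) (γone γtwo : ℝ → X) (hγone : IsGeodesic γone) (hγtwo : IsGeodesic γtwo)
    (h10 : γone 0 = x₁) (h20 : γtwo 0 = x₂)
    (h1 : (x₁, γone 1) ∈ measureSupport π) (h2 : (x₂, γtwo 1) ∈ measureSupport π) :
    ∀ t ∈ Icc (0 : ℝ) 1,
      dist x₁ (γone t) ^ 2 + dist x₂ (γtwo t) ^ 2 ≤
        dist x₁ (γtwo t) ^ 2 + dist x₂ (γone t) ^ 2 := by
  intro t ht
  obtain ⟨ht0, ht1⟩ := ht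
  have h01 : (0 : ℝ) ∈ Icc (0 : ℝ) 1 := ⟨le_refl _, zero_le_one⟩
  have h11 : (1 : ℝ) ∈ Icc (0 : ℝ) 1 := ⟨zero_le_one, le_refl _⟩
  have htm : t ∈ Icc (0 : ℝ) 1 := ⟨ht0, ht1⟩
  set d₁ := dist x₁ (γone 1) with hd₁
  set d₂ := dist x₂ (γtwo 1) with hd₂
  -- two-point cyclical monotonicity
  have key := hmono 2 ![x₁, x₂] ![γone 1, γtwo 1]
    (by intro i; fin_cases i <;> simpa using (by first | exact h1 | exact h2)) (Equiv.swap 0 1)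
  simp [Fin.sum_univ_two, Equiv.swap_apply_left, Equiv.swap_apply_right] at key
  -- key : d₁^2 + d₂^2 ≤ dist x₂ (γone 1)^2 + dist x₁ (γtwo 1)^2
  -- geodesic identities
  have e1t : dist x₁ (γone t) = t * d₁ := by
    have := hγone 0 h01 t htm
    rw [h10] at this
    rw [this, abs_of_nonpos (by linarith), hd₁, ← h10]
    ring
  have e2t : dist x₂ (γtwo t) = t * d₂ := by
    have := hγtwo 0 h01 t htm
    rw [h20] at this
    rw [this, abs_of_nonpos (by linarith), hd₂, ← h20]
    ring
  have f1 : dist (γone t) (γone 1) = (1 - t) * d₁ := by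
    have := hγone t htm 1 h11
    rw [this, abs_of_nonpos (by linarith), hd₁, ← h10]
    ring
  have f2 : dist (γtwo t) (γtwo 1) = (1 - t) * d₂ := by
    have := hγtwo t htm 1 h11
    rw [this, abs_of_nonpos (by linarith), hd₂, ← h20]
    ring
  set A := dist x₁ (γtwo 1) with hA
  set B := dist x₂ (γone 1) with hB
  -- triangle inequalities
  have tri1 : A - (1 - t) * d₂ ≤ dist x₁ (γtwo t) := by
    have := dist_triangle x₁ (γtwo t) (γtwo 1)
    rw [f2] at this; linarith
  have tri2 : B - (1 - t) * d₁ ≤ dist x₂ (γone t) := by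
    have := dist_triangle x₂ (γone t) (γone 1)
    rw [f1] at this; linarith
  have q1 := quad_helper dist_nonneg dist_nonneg dist_nonneg ht0 ht1 tri1
  have q2 := quad_helper dist_nonneg dist_nonneg dist_nonneg ht0 ht1 tri2
  rw [e1t, e2t]
  nlinarith [q1, q2, key, mul_nonneg (mul_nonneg ht0 ht0) (sq_nonneg d₁),
    mul_nonneg ht0 (sub_nonneg.2 ht1)]
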